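/- arXiv:1205.3605 — 4 statements merged into one kernel-verified Lean document; each statement's English description precedes it below -/
import Mathlib

section
/- For every finite tree S with nonnegative edge costs, the cost and the power of S satisfy c(S) ≤ p(S) ≤ 2·c(S). -/
open scoped NNReal

/-- The power of a vertex `v` w.r.t. an edge set `E` with costs `c`: the maximum cost of an
edge of `E` incident to `v` (`0` if `v` has no incident edge, since `sSup ∅ = 0` in `ℝ≥0`). -/
noncomputable def vertexPower {V : Type*} (c : Sym2 V → ℝ≥0) (E : Set (Sym2 V)) (v : V) : ℝ≥0 :=
  sSup (c '' {f | f ∈ E ∧ v ∈ f})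

/-- The power of an edge set `E`: the sum of the powers of all vertices (vertices not
touched by `E` contribute `0`). -/
noncomputable def setPower {V : Type*} (c : Sym2 V → ℝ≥0) (E : Set (Sym2 V)) : ℝ≥0 :=
  ∑ᶠ v : V, vertexPower c E v

/-- The cost of an edge set `E`: the sum of the costs of its edges. -/
noncomputable def setCost {V : Type*} (c : Sym2 V → ℝ≥0) (E : Set (Sym2 V)) : ℝ≥0 :=
  ∑ᶠ f ∈ E, c f

open SimpleGraph Finset Walk

/-- If `e` is an edge of `E` incident to `v`, then `c e ≤ vertexPower c E v`. -/
lemma le_vertexPower {V : Type*} [Fintype V] (c : Sym2 V → ℝ≥0) (E : Set (Sym2 V))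
    {v : V} {e : Sym2 V} (he : e ∈ E) (hv : v ∈ e) : c e ≤ vertexPower c E v := by
  classical
  exact le_csSup ((Set.toFinite _).bddAbove) ⟨e, ⟨he, hv⟩, rfl⟩

lemma sum_edges_le {V : Type*} [Fintype V] (S : SimpleGraph V) (hS : S.IsTree)
    (c : Sym2 V → ℝ≥0) [Fintype S.edgeSet] [DecidableEq V] :
    ∑ e ∈ S.edgeFinset, c e ≤ ∑ v, vertexPower c S.edgeSet v := by
  have := hS.isConnected.nonempty
  inhabit V
  choose f hf hf' using (hS.existsUnique_path · default)
  have key : ∑ w ∈ ({default} : Finset V)ᶜ, c s(w, (f w).getVert 1) = ∑ e ∈ S.edgeFinset, c e := by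
    refine Finset.sum_bij (fun w _ => s(w, (f w).getVert 1)) (fun a ha => ?memEdges)
      ?inj ?surj (fun a ha => rfl)
    case memEdges =>
      have hn : ¬ (f a).Nil := not_nil_of_ne (by simpa using ha)
      show s(a, (f a).getVert 1) ∈ S.edgeFinset
      rw [← edge_firstDart _ hn]
      simp
    case inj =>
      intros a ha b hb h
      change s(a, (f a).getVert 1) = s(b, (f b).getVert 1) at h
      rw [← edge_firstDart _ (not_nil_of_ne (by simpa using ha)),
        ← edge_firstDart _ (not_nil_of_ne (by simpa using hb))] at h
      wlog h' : (f a).length ≤ (f b).length generalizing a b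
      · exact Eq.symm (this _ hb _ ha h.symm (le_of_not_ge h'))
      rw [dart_edge_eq_iff] at h
      obtain (h | h) := h
      · exact (congrArg (·.fst) h)
      · have h1 : ((f a).firstDart <| not_nil_of_ne (by simpa using ha)).snd = b :=
          congrArg (·.snd) h
        have h3 := congrArg Walk.length (hf' _ ((f _).tail.copy h1 rfl) ?_)
        · replace h3 : (f a).tail.length = (f b).length := (length_copy _ _ _).symm.trans h3
          rw [← add_left_inj 1,
            length_tail_add_one (not_nil_of_ne (by simpa using ha))] at h3
          omega
        · simp only [ne_eq, eq_mp_eq_cast, id_eq, isPath_copy]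
          exact (isPath_copy _ _ _).2 (hf a).tail
    case surj =>
      simp only [mem_edgeFinset, Finset.mem_compl, Finset.mem_singleton, Sym2.forall, SimpleGraph.mem_edgeSet]
      intros x y h
      wlog h' : (f x).length ≤ (f y).length generalizing x y
      · rw [Sym2.eq_swap]
        exact this y x h.symm (le_of_not_ge h')
      refine ⟨y, ?_, ?_⟩
      · rintro rfl
        rw [← hf' _ nil IsPath.nil, length_nil,
            ← hf' _ (.cons h .nil) (IsPath.nil.cons <| by simpa using h.ne),
            length_cons, length_nil] at h'
        simp [Nat.le_zero, Nat.one_ne_zero] at h'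
      · show s(y, (f y).getVert 1) = s(x, y)
        rw [← hf' _ (.cons h.symm (f x)) ((cons_isPath_iff _ _).2 ⟨hf _, fun hy => ?contra⟩)]
        · simp only [getVert_cons_succ, getVert_zero]
          exact Sym2.eq_swap
        case contra =>
          suffices (f x).takeUntil y hy = .cons h .nil by
            rw [← take_spec _ hy] at h'
            simp [this, hf' _ _ ((hf _).dropUntil hy)] at h'
          refine (hS.existsUnique_path _ _).unique ((hf _).takeUntil _) ?_
          simp [h.ne]
  rw [← key]
  refine le_trans (Finset.sum_le_sum ?_) (Finset.sum_le_sum_of_subset (Finset.subset_univ _))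
  intro a ha
  have hn : ¬ (f a).Nil := not_nil_of_ne (by simpa using ha)
  refine le_vertexPower c S.edgeSet ?_ (Sym2.mem_mk_left _ _)
  rw [← edge_firstDart _ hn]
  exact ((f a).firstDart hn).edge_mem

lemma vertexPower_le_sum {V : Type*} [Fintype V] (S : SimpleGraph V)
    (c : Sym2 V → ℝ≥0) [Fintype S.edgeSet] [DecidableEq V] (v : V) :
    vertexPower c S.edgeSet v ≤ ∑ e ∈ S.edgeFinset.filter (v ∈ ·), c e := by
  refine csSup_le' ?_
  rintro b ⟨e, ⟨he, hv⟩, rfl⟩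
  exact Finset.single_le_sum (fun i _ => zero_le)
    (Finset.mem_filter.2 ⟨SimpleGraph.mem_edgeFinset.2 he, hv⟩)

/-- For every finite tree `S` with nonnegative edge costs, `c(S) ≤ p(S) ≤ 2·c(S)`. -/
theorem stmt_0 {V : Type*} [Fintype V] (S : SimpleGraph V) (hS : S.IsTree)
    (c : Sym2 V → ℝ≥0) :
    setCost c S.edgeSet ≤ setPower c S.edgeSet ∧
      setPower c S.edgeSet ≤ 2 * setCost c S.edgeSet := by
  classical
  have hcost : setCost c S.edgeSet = ∑ e ∈ S.edgeFinset, c e := by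
    rw [setCost, ← S.coe_edgeFinset, finsum_mem_coe_finset]
  have hpow : setPower c S.edgeSet = ∑ v, vertexPower c S.edgeSet v :=
    finsum_eq_sum_of_fintype _
  constructor
  · rw [hcost, hpow]
    exact sum_edges_le S hS c
  · rw [hcost, hpow]
    calc ∑ v, vertexPower c S.edgeSet v
        ≤ ∑ v, ∑ e ∈ S.edgeFinset.filter (v ∈ ·), c e :=
          Finset.sum_le_sum fun v _ => vertexPower_le_sum S c v
      _ = ∑ e ∈ S.edgeFinset, (Finset.univ.filter (· ∈ e)).card • c e := by
          simp_rw [Finset.sum_filter]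
          rw [Finset.sum_comm]
          refine Finset.sum_congr rfl fun e _ => ?_
          rw [← Finset.sum_filter, Finset.sum_const]
      _ = ∑ e ∈ S.edgeFinset, 2 * c e := by
          refine Finset.sum_congr rfl fun e he => ?_
          have hd := S.not_isDiag_of_mem_edgeSet (SimpleGraph.mem_edgeFinset.1 he)
          induction e with
          | _ a b =>
            have hab : a ≠ b := by simpa [Sym2.mk_isDiag_iff] using hd
            have : Finset.univ.filter (· ∈ s(a, b)) = {a, b} := by
              ext w; simp [Sym2.mem_iff]
            rw [this, Finset.card_insert_of_notMem (by simpa using hab),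
              Finset.card_singleton, one_add_one_eq_two, two_smul, two_mul]
      _ = 2 * ∑ e ∈ S.edgeFinset, c e := by rw [Finset.mul_sum]
end

section
/- Let G be a finite undirected graph with edge costs c : E(G) → ℝ≥0, let R ⊆ V(G), and let ρ ≥ 1 be a real number. If S is a Steiner tree for R whose cost satisfies c(S) ≤ ρ·c(S') for every Steiner tree S' for R, then for every Steiner tree S'' for R one has p(S) ≤ 2ρ·p(S''). In particular, a ρ-approximate minimum-cost Steiner tree is a 2ρ-approximate minimum-power Steiner tree. -/
open scoped NNReal

/-- A Steiner tree for terminal set `R` in `G`: a subgraph of `G` which is a tree and whose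
vertex set contains `R`. -/
def IsSteinerTree {V : Type*} (G : SimpleGraph V) (R : Set V) (S : G.Subgraph) : Prop :=
  S.coe.IsTree ∧ R ⊆ S.verts

open Classical in
lemma power_le_two_cost {V : Type*} [Fintype V] (c : Sym2 V → ℝ≥0) (E : Set (Sym2 V)) :
    setPower c E ≤ 2 * setCost c E := by
  classical
  have hE : E = ↑E.toFinset := by simp
  have hcost : setCost c E = ∑ f ∈ E.toFinset, c f := by
    rw [setCost, hE, finsum_mem_coe_finset]; simp
  have hpow : setPower c E = ∑ v, vertexPower c E v := finsum_eq_sum_of_fintype _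
  rw [hpow, hcost]
  have step1 : ∀ v : V, vertexPower c E v ≤ ∑ f ∈ E.toFinset.filter (v ∈ ·), c f := by
    intro v
    apply csSup_le'
    rintro x ⟨f, ⟨hfE, hvf⟩, rfl⟩
    exact Finset.single_le_sum (fun _ _ => zero_le)
      (Finset.mem_filter.2 ⟨Set.mem_toFinset.2 hfE, hvf⟩)
  calc ∑ v, vertexPower c E v
      ≤ ∑ v, ∑ f ∈ E.toFinset.filter (v ∈ ·), c f := Finset.sum_le_sum fun v _ => step1 v
    _ = ∑ v, ∑ f ∈ E.toFinset, if v ∈ f then c f else 0 := by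
        simp [Finset.sum_filter]
    _ = ∑ f ∈ E.toFinset, ∑ v, if v ∈ f then c f else 0 := Finset.sum_comm
    _ ≤ ∑ f ∈ E.toFinset, 2 * c f := by
        apply Finset.sum_le_sum
        intro f _
        have : (∑ v, if v ∈ f then c f else 0) = (Finset.univ.filter (· ∈ f)).card • c f := by
          rw [← Finset.sum_filter, Finset.sum_const]
        rw [this]
        have hcard : (Finset.univ.filter (· ∈ f)).card ≤ 2 := by
          induction f with
          | _ a b =>
            have : Finset.univ.filter (· ∈ s(a, b)) ⊆ {a, b} := by
              intro x hx
              simp only [Finset.mem_filter, Sym2.mem_iff] at hx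
              simp [hx.2]
            calc (Finset.univ.filter (· ∈ s(a, b))).card ≤ ({a, b} : Finset V).card :=
                  Finset.card_le_card this
              _ ≤ 2 := Finset.card_insert_le a {b} |>.trans (by simp)
        calc (Finset.univ.filter (· ∈ f)).card • c f
            ≤ 2 • c f := nsmul_le_nsmul_left zero_le hcard
          _ = 2 * c f := by rw [nsmul_eq_mul]; norm_num
    _ = 2 * ∑ f ∈ E.toFinset, c f := by rw [Finset.mul_sum]

/-- In a path, at most one edge contains the starting vertex. -/
lemma start_edge_unique {W : Type*} {G : SimpleGraph W} {x y : W} (p : G.Walk x y)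
    (hp : p.IsPath) {e1 e2 : Sym2 W} (h1 : e1 ∈ p.edges) (h2 : e2 ∈ p.edges)
    (hx1 : x ∈ e1) (hx2 : x ∈ e2) : e1 = e2 := by
  induction p with
  | nil => simp at h1
  | @cons a b yy h q ih =>
    rw [SimpleGraph.Walk.cons_isPath_iff] at hp
    have key : ∀ e : Sym2 W, e ∈ q.edges → a ∈ e → False := by
      intro e he hae
      have := Sym2.other_spec hae
      rw [← this] at he
      exact hp.2 (q.fst_mem_support_of_mem_edges he)
    simp only [SimpleGraph.Walk.edges_cons, List.mem_cons] at h1 h2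
    rcases h1 with h1 | h1
    · rcases h2 with h2 | h2
      · rw [h1, h2]
      · exact absurd hx2 (fun hx => (key e2 h2 hx).elim)
    · exact absurd hx1 (fun hx => (key e1 h1 hx).elim)

/-- In a path, at most one edge contains the final vertex. -/
lemma end_edge_unique {W : Type*} {G : SimpleGraph W} {x y : W} (p : G.Walk x y)
    (hp : p.IsPath) {e1 e2 : Sym2 W} (h1 : e1 ∈ p.edges) (h2 : e2 ∈ p.edges)
    (hy1 : y ∈ e1) (hy2 : y ∈ e2) : e1 = e2 := by
  apply start_edge_unique p.reverse (p.isPath_reverse_iff.2 hp) _ _ hy1 hy2 <;>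
    simpa [SimpleGraph.Walk.edges_reverse] using ‹_›

open Classical in
lemma edge_mem_path_endpoint {W : Type*} {G : SimpleGraph W} (hG : G.IsTree) (r : W)
    (P : ∀ w : W, G.Walk r w) (hP : ∀ w, (P w).IsPath)
    (hPuniq : ∀ (w : W) (q : G.Walk r w), q.IsPath → q = P w)
    {a b : W} (h : G.Adj a b) :
    s(a, b) ∈ (P a).edges ∨ s(a, b) ∈ (P b).edges := by
  by_cases hmem : s(a, b) ∈ (P a).edges
  · exact Or.inl hmem
  · right
    have huniq := (SimpleGraph.isAcyclic_iff_path_unique.mp hG.IsAcyclic)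
    have hb : b ∉ (P a).support := by
      intro hb
      have hdrop : ((P a).dropUntil b hb).IsPath := (hP a).dropUntil hb
      have hcons : (SimpleGraph.Walk.cons h.symm SimpleGraph.Walk.nil : G.Walk b a).IsPath := by
        simp [SimpleGraph.Walk.cons_isPath_iff, h.ne']
      have := huniq ⟨(P a).dropUntil b hb, hdrop⟩
        ⟨SimpleGraph.Walk.cons h.symm SimpleGraph.Walk.nil, hcons⟩
      have heq : (P a).dropUntil b hb = SimpleGraph.Walk.cons h.symm SimpleGraph.Walk.nil :=
        congrArg Subtype.val this
      have hba : s(b, a) ∈ ((P a).dropUntil b hb).edges := by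
        rw [heq]; simp
      have := (P a).edges_dropUntil_subset hb hba
      rw [Sym2.eq_swap] at this
      exact hmem this
    have hconcat : ((P a).concat h).IsPath := by
      rw [← SimpleGraph.Walk.isPath_reverse_iff, SimpleGraph.Walk.reverse_concat,
        SimpleGraph.Walk.cons_isPath_iff]
      refine ⟨(P a).isPath_reverse_iff.2 (hP a), ?_⟩
      simpa [SimpleGraph.Walk.support_reverse] using hb
    have := hPuniq b _ hconcat
    rw [← this, SimpleGraph.Walk.edges_concat]
    simp

open Classical in
lemma cost_le_power {V : Type*} [Fintype V] {G : SimpleGraph V} (c : Sym2 V → ℝ≥0)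
    (S : G.Subgraph) (hS : S.coe.IsTree) :
    setCost c S.edgeSet ≤ setPower c S.edgeSet := by
  classical
  obtain ⟨r⟩ : Nonempty ↥S.verts := hS.isConnected.nonempty
  set T := S.coe with hT
  have hEU := hS.existsUnique_path
  let P : ∀ w : ↥S.verts, T.Walk r w := fun w => (hEU r w).choose
  have hP : ∀ w, (P w).IsPath := fun w => (hEU r w).choose_spec.1
  have hPuniq : ∀ (w : ↥S.verts) (q : T.Walk r w), q.IsPath → q = P w :=
    fun w q hq => (hEU r w).choose_spec.2 q hq
  let Good : Sym2 V → ↥S.verts → Prop := fun e w =>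
    ∃ e' : Sym2 ↥S.verts, Sym2.map Subtype.val e' = e ∧ w ∈ e' ∧ e' ∈ (P w).edges
  have claim1 : ∀ e ∈ S.edgeSet, ∃ w : ↥S.verts, (w : V) ∈ e ∧ Good e w := by
    intro e he
    induction e with
    | _ u v =>
      rw [SimpleGraph.Subgraph.mem_edgeSet] at he
      have hadj : T.Adj ⟨u, S.edge_vert he⟩ ⟨v, S.edge_vert he.symm⟩ := he.coe
      rcases edge_mem_path_endpoint hS r P hP hPuniq hadj with hc | hc
      · exact ⟨⟨u, S.edge_vert he⟩, by simp,
          ⟨s(⟨u, S.edge_vert he⟩, ⟨v, S.edge_vert he.symm⟩), by simp, by simp, hc⟩⟩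
      · exact ⟨⟨v, S.edge_vert he.symm⟩, by simp,
          ⟨s(⟨u, S.edge_vert he⟩, ⟨v, S.edge_vert he.symm⟩), by simp, by simp, hc⟩⟩
  have claim2 : ∀ e1 e2 : Sym2 V, ∀ w : ↥S.verts, Good e1 w → Good e2 w → e1 = e2 := by
    rintro e1 e2 w ⟨e'1, rfl, hw1, hm1⟩ ⟨e'2, rfl, hw2, hm2⟩
    rw [end_edge_unique (P w) (hP w) hm1 hm2 hw1 hw2]
  haveI : Nonempty V := ⟨r.1⟩
  let g : Sym2 V → V := fun e =>
    if he : e ∈ S.edgeSet then ((claim1 e he).choose : V) else Classical.arbitrary V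
  have hg_mem : ∀ e (he : e ∈ S.edgeSet), g e ∈ e := by
    intro e he; simp only [g, dif_pos he]; exact (claim1 e he).choose_spec.1
  have hg_inj : ∀ e1 ∈ S.edgeSet.toFinset, ∀ e2 ∈ S.edgeSet.toFinset, g e1 = g e2 → e1 = e2 := by
    intro e1 h1 e2 h2 hgeq
    rw [Set.mem_toFinset] at h1 h2
    simp only [g, dif_pos h1, dif_pos h2] at hgeq
    have hw : (claim1 e1 h1).choose = (claim1 e2 h2).choose := Subtype.ext hgeq
    exact claim2 e1 e2 _ (claim1 e1 h1).choose_spec.2 (hw ▸ (claim1 e2 h2).choose_spec.2)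
  have hcost : setCost c S.edgeSet = ∑ f ∈ S.edgeSet.toFinset, c f := by
    rw [setCost, ← finsum_mem_coe_finset]; simp
  have hpow : setPower c S.edgeSet = ∑ v, vertexPower c S.edgeSet v := finsum_eq_sum_of_fintype _
  rw [hcost, hpow]
  calc ∑ f ∈ S.edgeSet.toFinset, c f
      ≤ ∑ f ∈ S.edgeSet.toFinset, vertexPower c S.edgeSet (g f) := by
        apply Finset.sum_le_sum
        intro f hf
        rw [Set.mem_toFinset] at hf
        apply le_csSup (Set.Finite.bddAbove ((Set.toFinite _).image c))
        exact ⟨f, ⟨hf, hg_mem f hf⟩, rfl⟩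
    _ = ∑ v ∈ S.edgeSet.toFinset.image g, vertexPower c S.edgeSet v :=
        (Finset.sum_image hg_inj).symm
    _ ≤ ∑ v, vertexPower c S.edgeSet v :=
        Finset.sum_le_sum_of_subset (Finset.subset_univ _)

/-- If `S` is a Steiner tree for `R` whose cost is at most `ρ` times the cost of every
Steiner tree for `R` (with `ρ ≥ 1`), then the power of `S` is at most `2ρ` times the power
of every Steiner tree for `R`. -/
theorem stmt_1 {V : Type*} [Fintype V] (G : SimpleGraph V) (c : Sym2 V → ℝ≥0)
    (R : Set V) (ρ : ℝ) (hρ : 1 ≤ ρ)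
    (S : G.Subgraph) (hS : IsSteinerTree G R S)
    (happrox : ∀ S' : G.Subgraph, IsSteinerTree G R S' →
      (setCost c S.edgeSet : ℝ) ≤ ρ * (setCost c S'.edgeSet : ℝ)) :
    ∀ S'' : G.Subgraph, IsSteinerTree G R S'' →
      (setPower c S.edgeSet : ℝ) ≤ 2 * ρ * (setPower c S''.edgeSet : ℝ) := by
  intro S'' hS''
  have hρ0 : (0 : ℝ) ≤ ρ := le_trans zero_le_one hρ
  have hA : (setPower c S.edgeSet : ℝ) ≤ 2 * (setCost c S.edgeSet : ℝ) := by
    exact_mod_cast power_le_two_cost c S.edgeSet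
  have hB : (setCost c S''.edgeSet : ℝ) ≤ (setPower c S''.edgeSet : ℝ) := by
    exact_mod_cast cost_le_power c S'' hS''.1
  have h2 := happrox S'' hS''
  calc (setPower c S.edgeSet : ℝ)
      ≤ 2 * (setCost c S.edgeSet : ℝ) := hA
    _ ≤ 2 * (ρ * (setCost c S''.edgeSet : ℝ)) := by
        exact mul_le_mul_of_nonneg_left h2 (by norm_num)
    _ = 2 * ρ * (setCost c S''.edgeSet : ℝ) := by ring
    _ ≤ 2 * ρ * (setPower c S''.edgeSet : ℝ) := by
        exact mul_le_mul_of_nonneg_left hB (by linarith)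
end

section
/- For every integer i ≥ 0, the series ∑_{q=1}^∞ H_{q+i}/2^q converges and ∑_{q=1}^∞ H_{q+i}/2^q = 2^i·(2·ln 2 − ∑_{q=1}^i H_q/2^q). -/
/-- The `n`-th harmonic number `H_n = ∑_{j=1}^n 1/j` (with `H 0 = 0`). -/
noncomputable def H (n : ℕ) : ℝ := ∑ j ∈ Finset.Icc 1 n, (1 : ℝ) / (j : ℝ)

lemma H_eq_range (n : ℕ) : H n = ∑ j ∈ Finset.range (n + 1), (1 : ℝ) / (j : ℝ) := by
  rw [H, Finset.range_eq_Ico, Finset.sum_eq_sum_Ico_succ_bot (Nat.succ_pos n),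
    Nat.succ_eq_add_one, Finset.Ico_add_one_right_eq_Icc]
  simp

lemma g_hasSum : HasSum (fun n : ℕ => (1 / 2 : ℝ) ^ n / n) (Real.log 2) := by
  have h := Real.hasSum_pow_div_log_of_abs_lt_one (x := (1/2 : ℝ))
    (by rw [abs_of_pos] <;> norm_num)
  have h2 : (1:ℝ) - 1/2 = 1/2 := by norm_num
  rw [h2, Real.log_div one_ne_zero two_ne_zero, Real.log_one, zero_sub, neg_neg] at h
  have h' : HasSum (fun n : ℕ => (1/2:ℝ)^(n+1)/((n+1 : ℕ) : ℝ))
      (Real.log 2 - ∑ j ∈ Finset.range 1, (1/2:ℝ)^j/(j:ℝ)) := by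
    simpa using h
  exact (hasSum_nat_add_iff' 1).mp h'

lemma main_hasSum : HasSum (fun n : ℕ => H n / 2 ^ n) (2 * Real.log 2) := by
  have hf : HasSum (fun n : ℕ => (1 / 2 : ℝ) ^ n) 2 := by
    have h := hasSum_geometric_of_lt_one (r := (1/2:ℝ)) (by norm_num) (by norm_num)
    norm_num at h ⊢
    exact h
  have hfn : Summable fun n : ℕ => ‖(1 / 2 : ℝ) ^ n‖ := by
    simpa [abs_of_nonneg] using hf.summable.abs
  have hgn : Summable fun n : ℕ => ‖(1 / 2 : ℝ) ^ n / (n : ℝ)‖ := by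
    simpa [abs_of_nonneg, abs_div] using g_hasSum.summable.abs
  have hprod := hasSum_sum_range_mul_of_summable_norm hfn hgn
  rw [hf.tsum_eq, g_hasSum.tsum_eq] at hprod
  convert hprod using 2 with n
  · rfl
  rw [H_eq_range]
  have key : ∀ k ∈ Finset.range (n + 1),
      (1 / 2 : ℝ) ^ k * ((1 / 2 : ℝ) ^ (n - k) / (n - k : ℕ)) =
      (1 / 2 : ℝ) ^ n * (1 / (n - k : ℕ)) := by
    intro k hk
    rw [Finset.mem_range] at hk
    rw [← mul_div_assoc, ← pow_add,
      Nat.add_sub_cancel' (Nat.lt_succ_iff.mp hk), mul_one_div]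
  rw [Finset.sum_congr rfl key, ← Finset.mul_sum]
  have hr := Finset.sum_range_reflect (fun j => (1:ℝ)/(j:ℝ)) (n+1)
  simp only [Nat.add_sub_cancel] at hr
  rw [hr, div_pow]
  ring

/-- For every integer `i ≥ 0`, the series `∑_{q=1}^∞ H_{q+i}/2^q` converges and its sum
equals `2^i · (2 ln 2 − ∑_{q=1}^i H_q/2^q)`. -/
theorem stmt_9 (i : ℕ) :
    HasSum (fun q : ℕ => H (q + 1 + i) / 2 ^ (q + 1))
      ((2 : ℝ) ^ i * (2 * Real.log 2 - ∑ q ∈ Finset.Icc 1 i, H q / 2 ^ q)) := by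
  have h1 : HasSum (fun n : ℕ => H (n + (i + 1)) / 2 ^ (n + (i + 1)))
      (2 * Real.log 2 - ∑ q ∈ Finset.range (i + 1), H q / 2 ^ q) := by
    exact (hasSum_nat_add_iff' (i + 1)).mpr main_hasSum
  have h2 := h1.mul_left ((2 : ℝ) ^ i)
  have hIcc : ∑ q ∈ Finset.range (i + 1), H q / 2 ^ q = ∑ q ∈ Finset.Icc 1 i, H q / 2 ^ q := by
    rw [Finset.range_eq_Ico, Finset.sum_eq_sum_Ico_succ_bot (Nat.succ_pos i),
      Nat.succ_eq_add_one, Finset.Ico_add_one_right_eq_Icc]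
    simp [H]
  rw [hIcc] at h2
  convert h2 using 2 with q
  · rfl
  rw [show q + 1 + i = q + (i + 1) by ring, pow_add]
  have : (2:ℝ) ^ (q+1) ≠ 0 := by positivity
  field_simp
  ring
end

section
/- For every integer i ≥ 0, δ_{i+1} − δ_i = 1/((i+1)·2^{i+1}) + (1 − 1/2^{i+1})·∑_{q=1}^∞ 1/(2^q·(q+i+1)) + (1/2^{i+1})·(∑_{q=1}^∞ H_{q+i}/2^q − H_i). -/
/-- `δ_i = (1/2^i)·H_i + (1 − 1/2^i)·∑_{q=1}^∞ H_{q+i}/2^q`. -/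
noncomputable def δ (i : ℕ) : ℝ :=
  (1 / 2 ^ i) * H i + (1 - 1 / 2 ^ i) * ∑' q : ℕ, H (q + 1 + i) / 2 ^ (q + 1)

lemma H_succ (n : ℕ) : H (n + 1) = H n + 1 / ((n : ℝ) + 1) := by
  unfold H
  rw [Finset.sum_Icc_succ_top (by omega)]
  push_cast
  ring

lemma H_nonneg (n : ℕ) : 0 ≤ H n := by
  unfold H
  exact Finset.sum_nonneg fun j _ => by positivity

lemma H_le (n : ℕ) : H n ≤ n := by
  induction n with
  | zero => simp [H]
  | succ n ih =>
    rw [H_succ]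
    push_cast
    have : 1 / ((n : ℝ) + 1) ≤ 1 := by
      rw [div_le_one (by positivity)]; linarith [Nat.cast_nonneg (α := ℝ) n]
    linarith

lemma summable_H (i : ℕ) : Summable (fun q : ℕ => H (q + 1 + i) / 2 ^ (q + 1)) := by
  have hg : Summable (fun q : ℕ => ((q : ℝ) + 1 + i) * (1 / 2 : ℝ) ^ (q + 1)) := by
    have h1 : Summable (fun q : ℕ => (q : ℝ) * (1 / 2 : ℝ) ^ q) := by
      simpa using summable_pow_mul_geometric_of_norm_lt_one (R := ℝ) 1
        (r := (1/2 : ℝ)) (by norm_num)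
    have h2 : Summable (fun q : ℕ => ((1 : ℝ) + i) * (1 / 2 : ℝ) ^ q) :=
      (summable_geometric_of_lt_one (by norm_num) (by norm_num)).mul_left _
    have := ((h1.add h2).mul_left (1 / 2 : ℝ))
    refine this.congr fun q => ?_
    ring
  refine Summable.of_nonneg_of_le
    (fun q => div_nonneg (H_nonneg _) (by positivity)) (fun q => ?_) hg
  have h1 : H (q + 1 + i) ≤ ((q : ℝ) + 1 + i) := by
    have := H_le (q + 1 + i); push_cast at this ⊢; linarith
  have h2 : (0 : ℝ) < 2 ^ (q + 1) := by positivity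
  rw [div_le_iff₀ h2]
  calc H (q + 1 + i) ≤ ((q : ℝ) + 1 + i) := h1
    _ = ((q : ℝ) + 1 + i) * (1 / 2) ^ (q + 1) * 2 ^ (q + 1) := by
        field_simp
        rw [← mul_pow]; norm_num

lemma summable_T (i : ℕ) : Summable (fun q : ℕ => 1 / (2 ^ (q + 1) * ((q : ℝ) + 1 + i + 1))) := by
  refine Summable.of_nonneg_of_le (fun q => by positivity) (fun q => ?_)
    (summable_geometric_of_lt_one (r := (1/2 : ℝ)) (by norm_num) (by norm_num))
  rw [div_le_iff₀ (by positivity)]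
  have h2 : (0 : ℝ) < 2 ^ q := by positivity
  have h3 : (1 : ℝ) ≤ (q : ℝ) + 1 + i + 1 := by
    have := Nat.cast_nonneg (α := ℝ) q; have := Nat.cast_nonneg (α := ℝ) i; linarith
  have : (1/2 : ℝ) ^ q * (2 ^ (q + 1) * ((q : ℝ) + 1 + i + 1))
      = 2 * ((q : ℝ) + 1 + i + 1) := by
    rw [pow_succ]
    field_simp
    rw [← mul_pow]; norm_num
  rw [this]
  linarith

lemma tsum_shift (i : ℕ) :
    (∑' q : ℕ, H (q + 1 + (i + 1)) / 2 ^ (q + 1))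
      = (∑' q : ℕ, H (q + 1 + i) / 2 ^ (q + 1))
        + ∑' q : ℕ, 1 / (2 ^ (q + 1) * ((q : ℝ) + 1 + i + 1)) := by
  rw [← Summable.tsum_add (summable_H i) (summable_T i)]
  refine tsum_congr fun q => ?_
  have : q + 1 + (i + 1) = (q + 1 + i) + 1 := by omega
  rw [this, H_succ]
  push_cast
  field_simp

/-- For every integer `i ≥ 0`,
`δ_{i+1} − δ_i = 1/((i+1) 2^{i+1}) + (1 − 1/2^{i+1}) ∑_{q=1}^∞ 1/(2^q (q+i+1))
  + (1/2^{i+1}) (∑_{q=1}^∞ H_{q+i}/2^q − H_i)`. -/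
theorem stmt_15 (i : ℕ) :
    δ (i + 1) - δ i
      = 1 / (((i : ℝ) + 1) * 2 ^ (i + 1))
        + (1 - 1 / 2 ^ (i + 1)) * ∑' q : ℕ, 1 / (2 ^ (q + 1) * ((q : ℝ) + 1 + (i : ℝ) + 1))
        + (1 / 2 ^ (i + 1)) * ((∑' q : ℕ, H (q + 1 + i) / 2 ^ (q + 1)) - H i) := by
  unfold δ
  rw [tsum_shift i, H_succ]
  have h2 : (0 : ℝ) < 2 ^ (i + 1) := by positivity
  have hi : (0 : ℝ) < (i : ℝ) + 1 := by positivity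
  rw [pow_succ]
  field_simp
  ring
end
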